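/- Let L/K be a finite Galois extension of odd degree n = 2m+1 > 1 with Galois group G whose non-identity elements are grouped into inverse pairs {σ_i, σ_i⁻¹}, 1 ≤ i ≤ m. Setting A^i = {f_{b,σ_i} : b ∈ L}, there is a direct sum decomposition Alt(L) = A^1 ⊕ ⋯ ⊕ A^m, where each subspace A^i has K-dimension n; moreover, if σ_i has order 2r_i+1, then every nonzero element of A^i has rank n − n/(2r_i+1). -/

import Mathlib

variable {K L : Type*} [Field K] [Field L] [Algebra K L]

/-- The alternating bilinear form `f_{b,σ}(x,y) = Tr^L_K (b * (x * σ y - σ x * y))`,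
where `Tr^L_K` is the trace form of the extension `L/K`. -/
noncomputable def galoisAltForm (b : L) (σ : L ≃ₐ[K] L) : (L →ₗ[K] L →ₗ[K] K) :=
  LinearMap.mk₂ K (fun x y => Algebra.trace K L (b * (x * σ y - σ x * y)))
    (fun x x' y => by
      try dsimp only
      rw [show b * ((x + x') * σ y - σ (x + x') * y)
            = b * (x * σ y - σ x * y) + b * (x' * σ y - σ x' * y) by
          rw [map_add σ]; ring, map_add])
    (fun a x y => by
      try dsimp only
      rw [show b * ((a • x) * σ y - σ (a • x) * y)
            = a • (b * (x * σ y - σ x * y)) by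
          rw [map_smul σ]
          simp only [smul_sub, smul_mul_assoc, mul_smul_comm, mul_sub], map_smul])
    (fun x y y' => by
      try dsimp only
      rw [show b * (x * σ (y + y') - σ x * (y + y'))
            = b * (x * σ y - σ x * y) + b * (x * σ y' - σ x * y') by
          rw [map_add σ]; ring, map_add])
    (fun a x y => by
      try dsimp only
      rw [show b * (x * σ (a • y) - σ x * (a • y))
            = a • (b * (x * σ y - σ x * y)) by
          rw [map_smul σ]
          simp only [smul_sub, smul_mul_assoc, mul_smul_comm, mul_sub], map_smul])

/-- `b ↦ f_{b,σ}` as a `K`-linear map. -/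
noncomputable def galoisAltFormL (σ : L ≃ₐ[K] L) : L →ₗ[K] (L →ₗ[K] L →ₗ[K] K) where
  toFun b := galoisAltForm b σ
  map_add' b b' := by
    ext x y
    simp only [galoisAltForm, LinearMap.mk₂_apply, LinearMap.add_apply]
    rw [← map_add, add_mul]
  map_smul' a b := by
    ext x y
    simp only [galoisAltForm, LinearMap.mk₂_apply, LinearMap.smul_apply, RingHom.id_apply]
    rw [← map_smul, smul_mul_assoc]

/-- The rank of a bilinear form on `L`: `dim_K L` minus the dimension of its radical
`{x : L | ∀ y, f x y = 0}` (which is the kernel of `f` viewed as a map `L →ₗ[K] (L →ₗ[K] K)`). -/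
noncomputable def formRank (f : (L →ₗ[K] L →ₗ[K] K)) : ℕ :=
  Module.finrank K L - Module.finrank K (LinearMap.ker f)

/-- The space `Alt(L)` of all alternating `K`-bilinear forms on `L`. -/
def altSubspace (K L : Type*) [Field K] [Field L] [Algebra K L] :
    Submodule K (L →ₗ[K] L →ₗ[K] K) where
  carrier := {f | ∀ x : L, f x x = 0}
  add_mem' hf hg x := by simp [hf x, hg x]
  zero_mem' x := rfl
  smul_mem' a f hf x := by simp [hf x]


open Module LinearMap Finset

namespace S9Aux


-- fixed point of an involution on an odd-card fintype
lemma exists_fixed_of_involutive {ι : Type*} [Fintype ι] (hodd : Odd (Fintype.card ι))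
    (g : ι → ι) (hg : ∀ i, g (g i) = i) : ∃ i, g i = i := by
  by_contra hno
  push_neg at hno
  have h0 : ∑ _i : ι, (1 : ZMod 2) = 0 := by
    refine Finset.sum_ninvolution g (fun a => ?_) (fun a _ => hno a) (fun a => Finset.mem_univ _) hg
    decide
  have h1 : ((Fintype.card ι : ℕ) : ZMod 2) = 0 := by
    simpa [Finset.card_univ] using h0
  have h2 : (2 : ℕ) ∣ Fintype.card ι := by
    exact (ZMod.natCast_eq_zero_iff _ _).mp h1
  rw [Nat.odd_iff] at hodd
  omega

lemma det_alt_odd {K : Type*} [Field K] {N : ℕ} (hN : Odd N)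
    (M : Matrix (Fin N) (Fin N) K) (hdiag : ∀ i, M i i = 0)
    (hskew : ∀ i j, M j i = - M i j) : M.det = 0 := by
  classical
  rw [Matrix.det_apply]
  have hfixzero : ∀ π : Equiv.Perm (Fin N), π⁻¹ = π →
      (Equiv.Perm.sign π • ∏ i, M (π i) i : K) = 0 := by
    intro π hπ
    obtain ⟨i, hi⟩ := exists_fixed_of_involutive (by simpa using hN) π
      (fun i => by
        have h : π⁻¹ (π i) = i := π.symm_apply_apply i
        rwa [hπ] at h)
    have : ∏ i, M (π i) i = 0 :=
      Finset.prod_eq_zero (Finset.mem_univ i) (by rw [hi]; exact hdiag i)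
    rw [this, smul_zero]
  refine Finset.sum_ninvolution (fun π => π⁻¹) (fun π => ?_)
    (fun π hπ => ?_) (fun π => Finset.mem_univ _) (fun π => inv_inv π)
  · show (Equiv.Perm.sign π • ∏ i, M (π i) i : K)
        + Equiv.Perm.sign π⁻¹ • ∏ i, M (π⁻¹ i) i = 0
    by_cases hπ : π⁻¹ = π
    · rw [hπ, hfixzero π hπ, add_zero]
    · have hprod : ∏ i, M (π⁻¹ i) i = - ∏ i, M (π i) i := by
        calc ∏ i, M (π⁻¹ i) i = ∏ i, M (π⁻¹ (π i)) (π i) := (Equiv.prod_comp π _).symm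
          _ = ∏ i, M i (π i) := by simp
          _ = ∏ i, - M (π i) i := by
                exact Finset.prod_congr rfl fun i _ => hskew (π i) i
          _ = (-1 : K) ^ N * ∏ i, M (π i) i := by
                rw [show (fun i => - M (π i) i) = fun i => (-1 : K) * M (π i) i by
                      funext i; ring]
                rw [Finset.prod_mul_distrib, Finset.prod_const, Finset.card_univ,
                  Fintype.card_fin]
          _ = - ∏ i, M (π i) i := by rw [hN.neg_one_pow, neg_one_mul]
      rw [Equiv.Perm.sign_inv, hprod, smul_neg, add_neg_cancel]
  · intro h
    exact hπ (hfixzero π h)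



variable {K L : Type*} [Field K] [Field L] [Algebra K L]

section
variable [FiniteDimensional K L] [IsGalois K L]

lemma trace_algEquiv_apply (τ : L ≃ₐ[K] L) (z : L) :
    Algebra.trace K L (τ z) = Algebra.trace K L z := by
  apply (algebraMap K L).injective
  rw [trace_eq_sum_automorphisms, trace_eq_sum_automorphisms]
  rw [← Equiv.sum_comp (Equiv.mulRight τ) (fun g : L ≃ₐ[K] L => g z)]
  exact Fintype.sum_congr _ _ fun g => by simp [AlgEquiv.mul_apply]

/-- `gmap c = fun y => ∑ τ, c τ * τ y` as a linear map. -/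
noncomputable def gmap (c : (L ≃ₐ[K] L) → L) : L →ₗ[K] L :=
  ∑ τ : L ≃ₐ[K] L, c τ • (τ : L ≃ₐ[K] L).toLinearMap

lemma gmap_apply (c : (L ≃ₐ[K] L) → L) (y : L) :
    gmap c y = ∑ τ : L ≃ₐ[K] L, c τ * τ y := by
  simp [gmap, LinearMap.sum_apply, smul_eq_mul]

/-- The linear map sending `c : G → L` to the bilinear form
`(x, y) ↦ ∑ τ, Tr (c τ * x * τ y)`. -/
noncomputable def Phi : ((L ≃ₐ[K] L) → L) →ₗ[K] (L →ₗ[K] L →ₗ[K] K) where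
  toFun c := (Algebra.traceForm K L).compl₂ (gmap c)
  map_add' c c' := by
    ext x y
    simp [gmap_apply, LinearMap.compl₂_apply, Algebra.traceForm_apply, ← map_add,
      mul_add, ← Finset.sum_add_distrib, add_mul]
  map_smul' a c := by
    ext x y
    simp only [LinearMap.compl₂_apply, Algebra.traceForm_apply, RingHom.id_apply,
      LinearMap.smul_apply, gmap_apply]
    rw [← map_smul]
    congr 1
    simp [Finset.mul_sum, Finset.smul_sum, smul_mul_assoc, mul_smul_comm]

lemma Phi_apply (c : (L ≃ₐ[K] L) → L) (x y : L) :
    Phi c x y = ∑ τ : L ≃ₐ[K] L, Algebra.trace K L (c τ * x * τ y) := by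
  simp only [Phi, LinearMap.coe_mk, AddHom.coe_mk, LinearMap.compl₂_apply,
    Algebra.traceForm_apply, gmap_apply, Finset.mul_sum, map_sum]
  exact Finset.sum_congr rfl fun τ _ => by ring_nf

lemma Phi_injective : Function.Injective (Phi (K := K) (L := L)) := by
  rw [injective_iff_map_eq_zero]
  intro c hc
  have hg : gmap c = 0 := by
    ext y
    refine (traceForm_nondegenerate K L).1 (gmap c y) fun x => ?_
    have h1 : Phi c x y = 0 := by rw [hc]; rfl
    simpa [Phi, Algebra.traceForm_apply, mul_comm] using h1
  have li : LinearIndependent L (fun τ : L ≃ₐ[K] L => ((τ : L →* L) : L → L)) := by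
    refine (linearIndependent_monoidHom L L).comp
      (fun τ : L ≃ₐ[K] L => (τ : L →* L)) fun τ τ' h => ?_
    exact AlgEquiv.ext fun z => DFunLike.ext_iff.1 h z
  have hsum : ∑ τ : L ≃ₐ[K] L, c τ • ((τ : L →* L) : L → L) = 0 := by
    funext y
    have := congrArg (fun f : L →ₗ[K] L => f y) hg
    simpa [gmap_apply, smul_eq_mul] using this
  funext τ
  exact Fintype.linearIndependent_iff.mp li c hsum τ

end


section
variable [FiniteDimensional K L] [IsGalois K L]

lemma inv_apply_apply (τ : L ≃ₐ[K] L) (x : L) : τ (τ⁻¹ x) = x := by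
  rw [← AlgEquiv.mul_apply, mul_inv_cancel, AlgEquiv.one_apply]

lemma apply_inv_apply (τ : L ≃ₐ[K] L) (x : L) : τ⁻¹ (τ x) = x := by
  rw [← AlgEquiv.mul_apply, inv_mul_cancel, AlgEquiv.one_apply]

lemma galoisAltForm_apply (b : L) (τ : L ≃ₐ[K] L) (x y : L) :
    galoisAltForm b τ x y = Algebra.trace K L (b * (x * τ y - τ x * y)) := rfl

lemma pair_eq (τ : L ≃ₐ[K] L) (b x y : L) :
    Algebra.trace K L (b * x * τ y) + Algebra.trace K L ((-(τ⁻¹ b)) * x * τ⁻¹ y)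
      = galoisAltForm b τ x y := by
  have h : ((-(τ⁻¹ b)) * x * τ⁻¹ y) = τ⁻¹ (-(b * τ x * y)) := by
    rw [map_neg, map_mul, map_mul, apply_inv_apply]; ring
  rw [h, trace_algEquiv_apply, galoisAltForm_apply, map_neg, ← sub_eq_add_neg, ← map_sub]
  congr 1
  ring

variable {m : ℕ}

/-- the function `G → L` supported on the `σ i` and their inverses encoding
`∑ i, f_{d i, σ i}`. -/
noncomputable def Cmap (σ : Fin m → (L ≃ₐ[K] L))
    (e : (Unit ⊕ (Fin m ⊕ Fin m)) ≃ (L ≃ₐ[K] L)) :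
    (Fin m → L) →ₗ[K] ((L ≃ₐ[K] L) → L) where
  toFun d τ := Sum.elim (fun _ => (0 : L))
    (Sum.elim (fun i => d i) (fun i => -((σ i)⁻¹ (d i)))) (e.symm τ)
  map_add' d d' := by
    funext τ
    rcases h : e.symm τ with _ | (i | i) <;> simp [h, neg_add, add_comm]
  map_smul' a d := by
    funext τ
    rcases h : e.symm τ with _ | (i | i) <;> simp [h]

lemma Phi_Cmap (σ : Fin m → (L ≃ₐ[K] L))
    (e : (Unit ⊕ (Fin m ⊕ Fin m)) ≃ (L ≃ₐ[K] L))
    (he2 : ∀ i, e (Sum.inr (Sum.inl i)) = σ i)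
    (he3 : ∀ i, e (Sum.inr (Sum.inr i)) = (σ i)⁻¹) (d : Fin m → L) :
    Phi (Cmap σ e d) = ∑ i, galoisAltFormL (σ i) (d i) := by
  ext x y
  simp only [LinearMap.sum_apply]
  rw [Phi_apply]
  rw [← Equiv.sum_comp e (fun τ => Algebra.trace K L (Cmap σ e d τ * x * τ y))]
  rw [Fintype.sum_sum_type, Fintype.sum_sum_type]
  have h1 : ∀ u : Unit,
      Algebra.trace K L (Cmap σ e d (e (Sum.inl u)) * x * (e (Sum.inl u)) y) = 0 := by
    intro u
    simp [Cmap]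
  have h2 : ∀ i, Cmap σ e d (e (Sum.inr (Sum.inl i))) = d i := by
    intro i; simp [Cmap]
  have h3 : ∀ i, Cmap σ e d (e (Sum.inr (Sum.inr i))) = -((σ i)⁻¹ (d i)) := by
    intro i; simp [Cmap]
  rw [Finset.sum_congr rfl (fun u _ => h1 u)]
  simp only [Finset.sum_const_zero, zero_add]
  rw [← Finset.sum_add_distrib]
  refine Finset.sum_congr rfl fun i _ => ?_
  rw [h2, h3, he2, he3]
  exact pair_eq (σ i) (d i) x y

end



section
variable [FiniteDimensional K L] [IsGalois K L]

lemma rank_part (τ : L ≃ₐ[K] L) (r : ℕ) (hord : orderOf τ = 2 * r + 1)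
    (b : L) (hb : b ≠ 0) (f : L →ₗ[K] L →ₗ[K] K)
    (hfapp : ∀ x y, f x y = Algebra.trace K L (b * (x * τ y - τ x * y))) :
    Module.finrank K (LinearMap.ker f) = Module.finrank K L / (2 * r + 1) := by
  classical
  have hτb : τ b ≠ 0 := fun h => hb (by simpa using τ.injective (h.trans (map_zero τ).symm))
  -- the explicit solution x₀
  set x₀ : L := ∏ t ∈ Finset.range r, (τ ^ (2 * t + 1)) b with hx₀def
  have hx₀ : x₀ ≠ 0 := by
    rw [hx₀def]
    apply Finset.prod_ne_zero_iff.mpr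
    intro t _
    exact fun h => hb (by simpa using (τ ^ (2 * t + 1)).injective (h.trans (map_zero _).symm))
  have hkey : x₀ * b = τ b * τ (τ x₀) := by
    have hτ2 : τ (τ x₀) = ∏ t ∈ Finset.range r, (τ ^ (2 * t + 3)) b := by
      rw [hx₀def, map_prod, map_prod]
      refine Finset.prod_congr rfl fun t _ => ?_
      rw [← AlgEquiv.mul_apply, ← AlgEquiv.mul_apply]
      rw [show τ * τ * τ ^ (2 * t + 1) = τ ^ (2 * t + 3) by group]
    have h1 : x₀ * b = ∏ t ∈ Finset.range (r + 1), (τ ^ (2 * t + 1)) b := by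
      rw [Finset.prod_range_succ, ← hx₀def]
      congr 1
      rw [show 2 * r + 1 = orderOf τ from hord.symm, pow_orderOf_eq_one, AlgEquiv.one_apply]
    have h2 : τ b * τ (τ x₀) = ∏ t ∈ Finset.range (r + 1), (τ ^ (2 * t + 1)) b := by
      rw [Finset.prod_range_succ', hτ2]
      rw [Finset.prod_congr rfl fun t (_ : t ∈ Finset.range r) =>
        show (τ ^ (2 * (t + 1) + 1)) b = (τ ^ (2 * t + 3)) b by
          rw [show 2 * (t + 1) + 1 = 2 * t + 3 from by ring]]
      rw [mul_comm]
      norm_num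
    rw [h1, h2]
  -- kernel characterization
  have hker : ∀ x : L, x ∈ LinearMap.ker f ↔ b * x = τ b * τ (τ x) := by
    intro x
    rw [LinearMap.mem_ker]
    constructor
    · intro h
      have h0 : ∀ y, f x y = 0 := fun y => by rw [h]; rfl
      have h1 : ∀ y, Algebra.trace K L ((τ.symm (b * x) - b * τ x) * y) = 0 := by
        intro y
        have h2 := h0 y
        rw [hfapp] at h2
        have h3 : Algebra.trace K L (b * x * τ y) =
            Algebra.trace K L (τ.symm (b * x) * y) := by
          conv_lhs => rw [show b * x * τ y = τ (τ.symm (b * x) * y) by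
            rw [map_mul τ, τ.apply_symm_apply]]
          exact trace_algEquiv_apply τ _
        calc Algebra.trace K L ((τ.symm (b * x) - b * τ x) * y)
            = Algebra.trace K L (τ.symm (b * x) * y) - Algebra.trace K L (b * τ x * y) := by
              rw [← map_sub]; congr 1; ring
          _ = Algebra.trace K L (b * x * τ y) - Algebra.trace K L (b * τ x * y) := by rw [h3]
          _ = Algebra.trace K L (b * (x * τ y - τ x * y)) := by rw [← map_sub]; congr 1; ring
          _ = 0 := h2
      have h4 : τ.symm (b * x) - b * τ x = 0 := by
        refine (traceForm_nondegenerate K L).1 _ fun w => ?_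
        rw [Algebra.traceForm_apply]
        exact h1 w
      have h5 : τ.symm (b * x) = b * τ x := sub_eq_zero.mp h4
      have h6 := congrArg τ h5
      rw [τ.apply_symm_apply, map_mul] at h6
      rw [h6]
    · intro h
      ext y
      rw [hfapp]
      have : b * (x * τ y - τ x * y) = τ (b * τ x * y) - b * τ x * y := by
        rw [map_mul, map_mul]
        have hbx : b * x = τ b * τ (τ x) := h
        calc b * (x * τ y - τ x * y) = (b * x) * τ y - b * τ x * y := by ring
          _ = (τ b * τ (τ x)) * τ y - b * τ x * y := by rw [hbx]
          _ = τ b * τ (τ x) * τ y - b * τ x * y := by ring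
      rw [this, map_sub, trace_algEquiv_apply, sub_self]
      rfl
  -- the fixed field of ⟨τ⟩
  set Fs : IntermediateField K L := IntermediateField.fixedField (Subgroup.zpowers τ)
    with hFs
  have hfix : ∀ t : L, t ∈ Fs ↔ τ t = t := by
    intro t
    constructor
    · intro h
      exact h ⟨τ, Subgroup.mem_zpowers τ⟩
    · intro h
      intro g
      have hg : (g : L ≃ₐ[K] L) ∈ MulAction.stabilizer (L ≃ₐ[K] L) t := by
        have hle : Subgroup.zpowers τ ≤ MulAction.stabilizer (L ≃ₐ[K] L) t :=
          Subgroup.zpowers_le.mpr (by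
            rw [MulAction.mem_stabilizer_iff]
            exact h)
        exact hle g.2
      exact hg
  -- τ² fixes something implies τ fixes it
  have hfix2 : ∀ t : L, τ (τ t) = t → τ t = t := by
    intro t h2
    have hk : ∀ k : ℕ, ((τ * τ) ^ k) t = t := by
      intro k
      induction k with
      | zero => simp
      | succ k ih =>
        rw [pow_succ, AlgEquiv.mul_apply, AlgEquiv.mul_apply, h2, ih]
    have h3 : ((τ * τ) ^ (r + 1)) t = t := hk (r + 1)
    have h4 : (τ * τ) ^ (r + 1) = τ := by
      have : (τ * τ) = τ ^ 2 := (sq τ).symm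
      rw [this, ← pow_mul]
      have h5 : 2 * (r + 1) = (2 * r + 1) + 1 := by ring
      rw [h5, pow_succ, ← hord, pow_orderOf_eq_one, one_mul]
    rwa [h4] at h3
  -- the kernel is x₀ • Fs
  let φ : Fs →ₗ[K] L :=
    { toFun := fun t => x₀ * (t : L)
      map_add' := fun t t' => by push_cast; ring
      map_smul' := fun a t => by
        simp only [RingHom.id_apply]
        show x₀ * ((a • t : Fs) : L) = a • (x₀ * (t : L))
        rw [show ((a • t : Fs) : L) = a • (t : L) from rfl, mul_smul_comm] }
  have hφinj : Function.Injective φ := by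
    intro t t' h
    have : x₀ * (t : L) = x₀ * (t' : L) := h
    exact Subtype.ext (mul_left_cancel₀ hx₀ this)
  have hφrange : LinearMap.range φ = LinearMap.ker f := by
    apply le_antisymm
    · rintro _ ⟨t, rfl⟩
      rw [hker]
      have ht : τ (t : L) = t := (hfix t).mp t.2
      show b * (x₀ * (t : L)) = τ b * τ (τ (x₀ * (t : L)))
      rw [map_mul τ, ht, map_mul τ, ht]
      calc b * (x₀ * (t : L)) = (x₀ * b) * t := by ring
        _ = (τ b * τ (τ x₀)) * t := by rw [hkey]
        _ = τ b * (τ (τ x₀) * (t : L)) := by ring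
    · intro x hx
      rw [hker] at hx
      set t : L := x₀⁻¹ * x with htdef
      have h2 : τ (τ t) = t := by
        have e1 : τ (τ x) = (τ b)⁻¹ * (b * x) := by
          rw [hx]
          field_simp
        have e2 : τ (τ x₀) = (τ b)⁻¹ * (x₀ * b) := by
          rw [hkey]
          field_simp
        have hτx₀ : τ (τ x₀) ≠ 0 := by
          rw [e2]
          simp [hτb, hx₀, hb]
        rw [htdef, map_mul, map_mul, map_inv₀, map_inv₀, e1, e2]
        field_simp
      have hτt : τ t = t := hfix2 t h2
      have htF : t ∈ Fs := (hfix t).mpr hτt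
      exact ⟨⟨t, htF⟩, by
        show x₀ * t = x
        rw [htdef, ← mul_assoc, mul_inv_cancel₀ hx₀, one_mul]⟩
  -- dimensions
  have hdim2 : Module.finrank Fs L = 2 * r + 1 := by
    rw [hFs, IntermediateField.finrank_fixedField_eq_card]
    rw [Nat.card_zpowers, hord]
  have hdim1 : Module.finrank K Fs * (2 * r + 1) = Module.finrank K L := by
    rw [← hdim2]
    exact Module.finrank_mul_finrank K Fs L
  have hkerdim : Module.finrank K (LinearMap.ker f) = Module.finrank K Fs := by
    rw [← hφrange, LinearMap.finrank_range_of_inj hφinj]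
  rw [hkerdim, ← hdim1, Nat.mul_div_cancel]
  omega

end
end S9Aux

set_option synthInstance.maxHeartbeats 1000000 in
set_option maxHeartbeats 2000000 in
/-- for `n = 2m+1` odd, with `G \ {1}` partitioned into inverse pairs
`{σᵢ, σᵢ⁻¹}`, the subspaces `Aⁱ = {f_{b,σᵢ} : b ∈ L}` give a direct sum decomposition
`Alt(L) = A¹ ⊕ ⋯ ⊕ Aᵐ` with each `Aⁱ` of dimension `n`; and if `σᵢ` has order `2rᵢ+1`
then every nonzero element of `Aⁱ` has rank `n − n/(2rᵢ+1)`. -/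
theorem statement9 [FiniteDimensional K L] [IsGalois K L]
    (n m : ℕ) (hn : Module.finrank K L = n) (hnm : n = 2 * m + 1) (hm : 1 ≤ m)
    (σ : Fin m → (L ≃ₐ[K] L))
    (henum : Function.Bijective
      (Sum.elim (fun _ : Unit => (1 : L ≃ₐ[K] L))
        (Sum.elim σ fun i => (σ i)⁻¹) : Unit ⊕ (Fin m ⊕ Fin m) → (L ≃ₐ[K] L))) :
    iSupIndep (fun i => LinearMap.range (galoisAltFormL (σ i))) ∧
    (⨆ i, LinearMap.range (galoisAltFormL (σ i))) = altSubspace K L ∧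
    (∀ i, Module.finrank K (LinearMap.range (galoisAltFormL (σ i))) = n) ∧
    (∀ i (r : ℕ), orderOf (σ i) = 2 * r + 1 →
      ∀ f ∈ LinearMap.range (galoisAltFormL (σ i)), f ≠ 0 →
        formRank f = n - n / (2 * r + 1)) := by
  classical
  let e : (Unit ⊕ (Fin m ⊕ Fin m)) ≃ (L ≃ₐ[K] L) := Equiv.ofBijective _ henum
  have he1 : e (Sum.inl ()) = 1 := rfl
  have he2 : ∀ i, e (Sum.inr (Sum.inl i)) = σ i := fun _ => rfl
  have he3 : ∀ i, e (Sum.inr (Sum.inr i)) = (σ i)⁻¹ := fun _ => rfl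
  have hPC : ∀ d : Fin m → L,
      S9Aux.Phi (S9Aux.Cmap σ e d) = ∑ i, galoisAltFormL (σ i) (d i) :=
    fun d => S9Aux.Phi_Cmap σ e he2 he3 d
  have hsum_inj : ∀ d : Fin m → L, (∑ i, galoisAltFormL (σ i) (d i)) = 0 → d = 0 := by
    intro d hd
    have h1 : S9Aux.Phi (S9Aux.Cmap σ e d) = S9Aux.Phi 0 := by
      rw [hPC, map_zero, hd]
    have h2 : S9Aux.Cmap σ e d = S9Aux.Cmap σ e 0 := by
      rw [S9Aux.Phi_injective h1, map_zero]
    funext i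
    have h3 := congrFun h2 (e (Sum.inr (Sum.inl i)))
    simpa [S9Aux.Cmap] using h3
  have hFinj : ∀ i, Function.Injective (galoisAltFormL (σ i) : L →ₗ[K] _) := by
    intro i
    rw [injective_iff_map_eq_zero]
    intro b hb
    have hs : ∑ j, galoisAltFormL (σ j) ((Pi.single i b : Fin m → L) j) = 0 := by
      rw [Finset.sum_eq_single i]
      · rw [Pi.single_eq_same]; exact hb
      · intro j _ hj
        rw [Pi.single_eq_of_ne hj, map_zero]
      · intro h; exact absurd (Finset.mem_univ i) h
    have := congrFun (hsum_inj _ hs) i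
    simpa using this
  have hpart3 : ∀ i, Module.finrank K
      (LinearMap.range (galoisAltFormL (σ i) : L →ₗ[K] _)) = n := by
    intro i
    rw [LinearMap.finrank_range_of_inj (hFinj i), hn]
  have hpart1 : iSupIndep (fun i => LinearMap.range (galoisAltFormL (σ i))) := by
    apply iSupIndep_of_dfinsupp_lsum_injective
    intro v w hvw
    choose d hd using fun i => LinearMap.mem_range.mp (v i).2
    choose d' hd' using fun i => LinearMap.mem_range.mp (w i).2
    have hlsum : ∀ u : Π₀ i, ↥(LinearMap.range (galoisAltFormL (σ i))), (DFinsupp.lsum ℕ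
        (fun i => (LinearMap.range (galoisAltFormL (σ i))).subtype)) u
        = ∑ i, ((u i : L →ₗ[K] L →ₗ[K] K)) := by
      intro u
      rw [DFinsupp.lsum_apply_apply]
      rw [DFinsupp.sumAddHom_apply]
      rw [DFinsupp.sum_eq_sum_fintype]
      · rfl
      · intro i; rfl
    have hsum : ∑ i, galoisAltFormL (σ i) (d i - d' i) = 0 := by
      simp only [map_sub, Finset.sum_sub_distrib]
      rw [Finset.sum_congr rfl fun i _ => hd i, Finset.sum_congr rfl fun i _ => hd' i,
        ← hlsum, ← hlsum, hvw, sub_self]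
    have hd0 := hsum_inj _ hsum
    refine DFunLike.ext v w fun i => Subtype.ext ?_
    have h0 := congrFun hd0 i
    simp only [Pi.zero_apply] at h0
    rw [← hd i, ← hd' i, sub_eq_zero.mp h0]
  have hpart2 : (⨆ i, LinearMap.range (galoisAltFormL (σ i))) = altSubspace K L := by
    apply le_antisymm
    · refine iSup_le fun i => ?_
      rintro g ⟨b, rfl⟩
      intro x
      show Algebra.trace K L (b * (x * (σ i) x - (σ i) x * x)) = 0
      rw [show x * (σ i) x - (σ i) x * x = 0 by ring, mul_zero, map_zero]
    · intro f hf
      have hfalt : ∀ x : L, f x x = 0 := hf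
      have hfskew : ∀ x y, f y x = - f x y := by
        intro x y
        have h := hfalt (x + y)
        simp only [map_add, LinearMap.add_apply] at h
        rw [hfalt x, hfalt y] at h
        linear_combination h
      have hrank : finrank K ((L ≃ₐ[K] L) → L) = finrank K (L →ₗ[K] L →ₗ[K] K) := by
        rw [Module.finrank_pi_fintype K, Module.finrank_linearMap, Module.finrank_linearMap,
          Module.finrank_self, Finset.sum_const, Finset.card_univ, ← Nat.card_eq_fintype_card,
          IsGalois.card_aut_eq_finrank K L]
        simp [mul_comm, smul_eq_mul]
      obtain ⟨c, hc⟩ : ∃ c, S9Aux.Phi c = f := by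
        refine ⟨(S9Aux.Phi.linearEquivOfInjective S9Aux.Phi_injective hrank).symm f, ?_⟩
        have h1 : (S9Aux.Phi.linearEquivOfInjective S9Aux.Phi_injective hrank)
            ((S9Aux.Phi.linearEquivOfInjective S9Aux.Phi_injective hrank).symm f)
            = S9Aux.Phi ((S9Aux.Phi.linearEquivOfInjective S9Aux.Phi_injective hrank).symm f) := rfl
        rw [← h1, LinearEquiv.apply_symm_apply]
      have hskewc : ∀ τ : L ≃ₐ[K] L, c τ⁻¹ = - (τ⁻¹ (c τ)) := by
        have h0 : S9Aux.Phi (fun τ => c τ + τ (c τ⁻¹)) = 0 := by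
          ext x y
          rw [S9Aux.Phi_apply]
          have hsplit : ∀ τ : L ≃ₐ[K] L,
              Algebra.trace K L ((c τ + τ (c τ⁻¹)) * x * τ y)
                = Algebra.trace K L (c τ * x * τ y)
                  + Algebra.trace K L (τ (c τ⁻¹) * x * τ y) := by
            intro τ
            rw [← map_add]
            congr 1
            ring
          rw [Finset.sum_congr rfl fun τ _ => hsplit τ, Finset.sum_add_distrib]
          have h2 : ∀ τ : L ≃ₐ[K] L,
              Algebra.trace K L (τ (c τ⁻¹) * x * τ y)
                = Algebra.trace K L (c τ⁻¹ * y * τ⁻¹ x) := by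
            intro τ
            rw [← S9Aux.trace_algEquiv_apply τ (c τ⁻¹ * y * τ⁻¹ x)]
            congr 1
            rw [map_mul τ, map_mul τ, S9Aux.inv_apply_apply]
            ring
          rw [Finset.sum_congr rfl fun τ _ => h2 τ]
          have h3 : ∑ τ : L ≃ₐ[K] L, Algebra.trace K L (c τ⁻¹ * y * τ⁻¹ x)
              = ∑ τ : L ≃ₐ[K] L, Algebra.trace K L (c τ * y * τ x) :=
            Fintype.sum_equiv (Equiv.inv (L ≃ₐ[K] L)) _ _ fun τ => by
              simp [Equiv.inv_apply]
          rw [h3, ← S9Aux.Phi_apply, ← S9Aux.Phi_apply, hc]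
          rw [hfskew x y]
          simp
        have h1 : (fun τ : L ≃ₐ[K] L => c τ + τ (c τ⁻¹)) = 0 := by
          apply S9Aux.Phi_injective
          rw [h0, map_zero]
        intro τ
        have h2 := congrFun h1 τ⁻¹
        rw [inv_inv] at h2
        have h3 : c τ⁻¹ + τ⁻¹ (c τ) = 0 := h2
        linear_combination h3
      have hone : ∀ x : L, Algebra.trace K L (c 1 * x * x) = 0 := by
        intro x
        have h : S9Aux.Phi c x x = 0 := by rw [hc]; exact hfalt x
        rw [S9Aux.Phi_apply] at h
        rw [← Equiv.sum_comp e (fun τ => Algebra.trace K L (c τ * x * τ x))] at h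
        rw [Fintype.sum_sum_type, Fintype.sum_sum_type] at h
        have hu : ∑ u : Unit,
            Algebra.trace K L (c (e (Sum.inl u)) * x * (e (Sum.inl u)) x)
            = Algebra.trace K L (c 1 * x * x) := by
          have : ∀ u : Unit, e (Sum.inl u) = 1 := fun u => he1
          simp [this]
        have hp : ∀ i,
            Algebra.trace K L (c (e (Sum.inr (Sum.inl i))) * x * (e (Sum.inr (Sum.inl i))) x)
            + Algebra.trace K L (c (e (Sum.inr (Sum.inr i))) * x * (e (Sum.inr (Sum.inr i))) x)
              = 0 := by
          intro i
          rw [he2, he3, hskewc (σ i)]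
          rw [S9Aux.pair_eq (σ i) (c (σ i)) x x]
          rw [S9Aux.galoisAltForm_apply]
          rw [show x * (σ i) x - (σ i) x * x = 0 by ring, mul_zero, map_zero]
        rw [← Finset.sum_add_distrib] at h
        rw [Finset.sum_congr rfl fun i _ => hp i] at h
        rw [Finset.sum_const_zero, add_zero] at h
        rw [← hu]
        exact h
      have hc1 : c 1 = 0 := by
        by_contra hne
        set B : L →ₗ[K] L →ₗ[K] K :=
          (Algebra.traceForm K L).compl₂ (LinearMap.mul K L (c 1)) with hB
        have hBapp : ∀ x y, B x y = Algebra.trace K L (c 1 * x * y) := by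
          intro x y
          show Algebra.trace K L (x * (c 1 * y)) = _
          congr 1
          ring
        have hBalt : ∀ x, B x x = 0 := fun x => by rw [hBapp]; exact hone x
        have hBskew : ∀ x y, B y x = - B x y := by
          intro x y
          have h := hBalt (x + y)
          simp only [map_add, LinearMap.add_apply] at h
          rw [hBalt x, hBalt y] at h
          linear_combination h
        have hBnd : ∀ z : L, (∀ w, B z w = 0) → z = 0 := by
          intro z hz
          have hz2 : z * c 1 = 0 := by
            refine (traceForm_nondegenerate K L).1 _ fun w => ?_
            rw [Algebra.traceForm_apply]
            have h4 := hz w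
            rw [hBapp] at h4
            rw [show z * c 1 * w = c 1 * z * w by ring]
            exact h4
          rcases mul_eq_zero.mp hz2 with h | h
          · exact h
          · exact absurd h hne
        have hdet := (LinearMap.BilinForm.nondegenerate_iff_det_ne_zero
          (Module.finBasis K L)).mp
            ⟨hBnd, fun z hz => hBnd z fun w => by rw [hBskew w z, hz w, neg_zero]⟩
        apply hdet
        apply S9Aux.det_alt_odd
        · rw [hn, hnm]; exact ⟨m, by ring⟩
        · intro i
          rw [BilinForm.toMatrix_apply]
          exact hBalt _
        · intro i j
          rw [BilinForm.toMatrix_apply, BilinForm.toMatrix_apply]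
          exact hBskew _ _
      have hceq : c = S9Aux.Cmap σ e (fun i => c (σ i)) := by
        funext τ
        obtain ⟨s, rfl⟩ := e.surjective τ
        rcases s with u | i | i
        · cases u
          rw [show (S9Aux.Cmap σ e fun i => c (σ i)) (e (Sum.inl ())) = 0 by
            simp [S9Aux.Cmap], he1]
          exact hc1
        · rw [show (S9Aux.Cmap σ e fun i => c (σ i)) (e (Sum.inr (Sum.inl i))) = c (σ i) by
            simp [S9Aux.Cmap], he2]
        · rw [show (S9Aux.Cmap σ e fun i => c (σ i)) (e (Sum.inr (Sum.inr i)))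
              = -((σ i)⁻¹ (c (σ i))) by simp [S9Aux.Cmap], he3]
          exact hskewc (σ i)
      rw [← hc, hceq, hPC]
      exact Submodule.sum_mem _ fun i _ =>
        Submodule.mem_iSup_of_mem i (LinearMap.mem_range_self _ _)
  refine ⟨hpart1, hpart2, hpart3, ?_⟩
  intro i r hr f hf hf0
  obtain ⟨b, rfl⟩ := hf
  have hb : b ≠ 0 := fun h => hf0 (by rw [h, map_zero])
  show formRank (galoisAltForm b (σ i)) = n - n / (2 * r + 1)
  rw [formRank, S9Aux.rank_part (σ i) r hr b hb (galoisAltForm b (σ i))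
    (fun x y => rfl), hn]
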